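/- There is a commutative semiring R (one may take the Boolean semiring 𝔹 = ({0,1}, max, min, 0, 1)) such that no terminating old-model (Eiter–Kiesel) Semiring Turing Machine over R computes the conditional product function f_R; i.e., for every terminating old-model SRTM M over R there is an input x with ‖M‖(x) ≠ f_R(x). -/

import Mathlib

open scoped Classical

/-- An old-model (Eiter–Kiesel) Semiring Turing Machine over a semiring `R`
with alphabet symbols `A` (plus `Fin nE` extra tape symbols, among them the
blank).  Tape cells hold elements of `Σ ∪ R`, i.e. `(A ⊕ Fin nE) ⊕ R`.
Transitions carry a weight in `R`; `δ` may be infinite but must satisfy the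
three Eiter–Kiesel conditions. Directions: `true` = +1, `false` = −1. -/
structure OldSRTM (R : Type) (A : Type) where
  nQ : ℕ
  nE : ℕ
  blankE : Fin nE
  start : Fin nQ
  weights : Set R
  weights_fin : weights.Finite
  trans : Set ((Fin nQ × ((A ⊕ Fin nE) ⊕ R)) × (Fin nQ × ((A ⊕ Fin nE) ⊕ R)) × Bool × R)
  /-- (1) the machine cannot write or overwrite semiring values -/
  cond1 : ∀ t ∈ trans,
    ((∃ r : R, t.1.2 = Sum.inr r) ∨ (∃ r : R, t.2.1.2 = Sum.inr r)) → t.1.2 = t.2.1.2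
  /-- (2) weights come from `weights` or from under the head -/
  cond2 : ∀ t ∈ trans, t.2.2.2 ∈ weights ∨ t.1.2 = Sum.inr t.2.2.2
  /-- (3) the machine cannot discriminate semiring values -/
  cond3 : ∀ t ∈ trans, (∃ r : R, t.1.2 = Sum.inr r) →
    (∀ r' : R, ((t.1.1, Sum.inr r'), (t.2.1.1, Sum.inr r'), t.2.2.1, r') ∈ trans) ∨
    (∀ r' : R, ((t.1.1, Sum.inr r'), (t.2.1.1, Sum.inr r'), t.2.2.1, t.2.2.2) ∈ trans)

namespace OldSRTM

variable {R A : Type}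

abbrev Cell (M : OldSRTM R A) : Type := (A ⊕ Fin M.nE) ⊕ R

abbrev Trans (M : OldSRTM R A) : Type :=
  (Fin M.nQ × M.Cell) × (Fin M.nQ × M.Cell) × Bool × R

abbrev Config (M : OldSRTM R A) : Type := Fin M.nQ × (ℕ → M.Cell) × ℕ

def applicable (M : OldSRTM R A) (c : M.Config) : Set M.Trans :=
  {t | t ∈ M.trans ∧ t.1.1 = c.1 ∧ t.1.2 = c.2.1 c.2.2}

def stepTo (M : OldSRTM R A) (t : M.Trans) (c : M.Config) : M.Config :=
  ⟨t.2.1.1,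
    Function.update c.2.1 c.2.2 t.2.1.2,
    ((c.2.2 : ℤ) + (if t.2.2.1 then 1 else -1)).natAbs⟩

noncomputable def val [CommSemiring R] (M : OldSRTM R A) : ℕ → M.Config → R
  | 0, _ => 1
  | n + 1, c =>
    if M.applicable c = ∅ then 1
    else ∑ᶠ t ∈ M.applicable c, t.2.2.2 * val M n (M.stepTo t c)

def initTape (M : OldSRTM R A) (s : List (A ⊕ R)) : ℕ → M.Cell := fun i =>
  match s[i]? with
  | some (Sum.inl a) => Sum.inl (Sum.inl a)
  | some (Sum.inr r) => Sum.inr r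
  | none => Sum.inl (Sum.inr M.blankE)

def initConfig (M : OldSRTM R A) (s : List (A ⊕ R)) : M.Config :=
  ⟨M.start, M.initTape s, 0⟩

def StepRel (M : OldSRTM R A) (c c' : M.Config) : Prop :=
  ∃ t ∈ M.applicable c, c' = M.stepTo t c

def PathLen (M : OldSRTM R A) : ℕ → M.Config → M.Config → Prop
  | 0, c, c' => c' = c
  | n + 1, c, c'' => ∃ c', StepRel M c c' ∧ PathLen M n c' c''

def BoundedBy (M : OldSRTM R A) (ℓ : List (A ⊕ R) → ℕ) : Prop :=
  ∀ (s : List (A ⊕ R)) (n : ℕ) (c : M.Config),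
    PathLen M n (M.initConfig s) c → n ≤ ℓ s

def Terminating (M : OldSRTM R A) : Prop := ∃ ℓ, M.BoundedBy ℓ

noncomputable def output [CommSemiring R] (M : OldSRTM R A)
    (ℓ : List (A ⊕ R) → ℕ) (s : List (A ⊕ R)) : R :=
  val M (ℓ s) (M.initConfig s)

end OldSRTM

/-- `NP_old(R)`: functions computed by terminating old-model SRTMs over `R`
with polynomially bounded computation path lengths. -/
def NPold (R : Type) [CommSemiring R] (A : Type) [Fintype A]
    (f : List (A ⊕ R) → R) : Prop :=
  ∃ (M : OldSRTM R A) (ℓ : List (A ⊕ R) → ℕ) (p : Polynomial ℕ),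
    M.BoundedBy ℓ ∧ (∀ s, ℓ s ≤ p.eval s.length) ∧ ∀ s, f s = M.output ℓ s
open Classical in
/-- The conditional product function `f_R`: if the input is a block of
alphabet letters followed by an equally long block of semiring values, return
the product of the semiring values; otherwise return `0`. -/
noncomputable def condProd {R A : Type} [CommSemiring R] (x : List (A ⊕ R)) : R :=
  if ∃ (as : List A) (rs : List R),
      x = as.map Sum.inl ++ rs.map Sum.inr ∧ as.length = rs.length then
    (x.filterMap (fun e => match e with | Sum.inl _ => none | Sum.inr r => some r)).prod
  else 0

/-- The conditional product function cannot be computed by any terminating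
old-model SRTM over `R` (for any nonempty finite alphabet). -/
def CondProdUncomputableOld (R : Type) [CommSemiring R] : Prop :=
  ∀ (A : Type), Fintype A → Nonempty A →
    ∀ (M : OldSRTM R A) (ℓ : List (A ⊕ R) → ℕ), M.BoundedBy ℓ →
      ∃ x : List (A ⊕ R), M.output ℓ x ≠ condProd x


inductive B2 : Type
  | z : B2
  | o : B2
  deriving DecidableEq

instance : Fintype B2 := ⟨{B2.z, B2.o}, by intro x; cases x <;> simp⟩

instance : Zero B2 := ⟨B2.z⟩
instance : One B2 := ⟨B2.o⟩

instance : Add B2 :=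
  ⟨fun a b => match a with | B2.z => b | B2.o => B2.o⟩

instance : Mul B2 :=
  ⟨fun a b => match a with | B2.z => B2.z | B2.o => b⟩

instance : CommSemiring B2 where
  add_assoc a b c := by cases a <;> cases b <;> cases c <;> rfl
  zero_add a := by cases a <;> rfl
  add_zero a := by cases a <;> rfl
  add_comm a b := by cases a <;> cases b <;> rfl
  nsmul := nsmulRec
  mul_assoc a b c := by cases a <;> cases b <;> cases c <;> rfl
  one_mul a := by cases a <;> rfl
  mul_one a := by cases a <;> rfl
  left_distrib a b c := by cases a <;> cases b <;> cases c <;> rfl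
  right_distrib a b c := by cases a <;> cases b <;> cases c <;> rfl
  zero_mul a := by rfl
  mul_zero a := by cases a <;> rfl
  mul_comm a b := by cases a <;> cases b <;> rfl

lemma B2.zero_def : (0 : B2) = B2.z := rfl
lemma B2.one_def : (1 : B2) = B2.o := rfl

lemma B2.zero_ne_one : (0 : B2) ≠ 1 := by decide

lemma B2.add_eq_one_iff (a b : B2) : a + b = 1 ↔ a = 1 ∨ b = 1 := by
  cases a <;> cases b <;> decide

lemma B2.mul_eq_one_iff (a b : B2) : a * b = 1 ↔ a = 1 ∧ b = 1 := by
  cases a <;> cases b <;> decide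

lemma B2.eq_one_or_eq_zero (a : B2) : a = 1 ∨ a = 0 := by
  cases a
  · right; rfl
  · left; rfl

lemma B2.sum_eq_one_iff {α : Type*} (s : Finset α) (f : α → B2) :
    s.sum f = 1 ↔ ∃ a ∈ s, f a = 1 := by
  classical
  induction s using Finset.induction_on with
  | empty => simp
  | insert _ _ h ih =>
    rename_i a s
    rw [Finset.sum_insert h, B2.add_eq_one_iff, ih]
    simp

lemma B2.prod_replicate_one (m : ℕ) : (List.replicate m (1 : B2)).prod = 1 := by
  simp

section Machine

variable {A : Type} [Fintype A] (M : OldSRTM B2 A)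

def TrueStep (c c' : M.Config) : Prop :=
  ∃ t ∈ M.applicable c, t.2.2.2 = 1 ∧ c' = M.stepTo t c

def TPath : ℕ → M.Config → M.Config → Prop
  | 0, c, c' => c' = c
  | n + 1, c, c'' => ∃ c', TrueStep M c c' ∧ TPath n c' c''

def Dead (c : M.Config) : Prop := M.applicable c = ∅

def Accept (s : List (A ⊕ B2)) : Prop :=
  ∃ k d, TPath M k (M.initConfig s) d ∧ Dead M d

lemma tpath_to_pathLen : ∀ k (c d : M.Config), TPath M k c d → M.PathLen k c d := by
  intro k
  induction k with
  | zero => intro c d h; exact h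
  | succ n ih =>
    rintro c d ⟨c', ⟨t, ht, hw, rfl⟩, hp⟩
    exact ⟨M.stepTo t c, ⟨t, ht, rfl⟩, ih _ _ hp⟩

lemma pathLen_append : ∀ k (c d e : M.Config),
    M.PathLen k c d → M.StepRel d e → M.PathLen (k + 1) c e := by
  intro k
  induction k with
  | zero =>
    intro c d e h hs
    cases h
    exact ⟨e, hs, rfl⟩
  | succ n ih =>
    rintro c d e ⟨c', hs', hp⟩ hs
    exact ⟨c', hs', ih _ _ _ hp hs⟩

lemma val_one_of_path : ∀ k n (c d : M.Config), TPath M k c d → Dead M d → k ≤ n →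
    OldSRTM.val M n c = 1 := by
  intro k
  induction k with
  | zero =>
    intro n c d hp hd _
    cases hp
    cases n with
    | zero => rfl
    | succ n => simp only [OldSRTM.val]; rw [if_pos (show M.applicable c = ∅ from hd)]
  | succ k ih =>
    rintro n c d ⟨c', ⟨t, ht, hw, rfl⟩, hp⟩ hd hle
    cases n with
    | zero => omega
    | succ n =>
      simp only [OldSRTM.val]
      rw [if_neg (Set.nonempty_iff_ne_empty.mp ⟨t, ht⟩)]
      rw [finsum_mem_eq_finite_toFinset_sum _ (Set.toFinite _), B2.sum_eq_one_iff]
      refine ⟨t, ?_, ?_⟩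
      · rw [Set.Finite.mem_toFinset]; exact ht
      · rw [B2.mul_eq_one_iff]
        exact ⟨hw, ih _ _ _ hp hd (by omega)⟩

lemma val_imp : ∀ n (c : M.Config), OldSRTM.val M n c = 1 →
    (∃ k d, k ≤ n ∧ TPath M k c d ∧ Dead M d) ∨ (∃ d, TPath M n c d) := by
  intro n
  induction n with
  | zero => intro c _; exact Or.inr ⟨c, rfl⟩
  | succ n ih =>
    intro c hv
    by_cases h : M.applicable c = ∅
    · exact Or.inl ⟨0, c, by omega, rfl, h⟩
    · simp only [OldSRTM.val] at hv
      rw [if_neg h, finsum_mem_eq_finite_toFinset_sum _ (Set.toFinite _), B2.sum_eq_one_iff] at hv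
      obtain ⟨t, hts, hmul⟩ := hv
      rw [Set.Finite.mem_toFinset] at hts
      rw [B2.mul_eq_one_iff] at hmul
      obtain ⟨hw, hval⟩ := hmul
      rcases ih _ hval with ⟨k, d, hk, hp, hd⟩ | ⟨d, hp⟩
      · exact Or.inl ⟨k + 1, d, by omega, ⟨_, ⟨t, hts, hw, rfl⟩, hp⟩, hd⟩
      · exact Or.inr ⟨d, _, ⟨t, hts, hw, rfl⟩, hp⟩

lemma output_iff {ℓ : List (A ⊕ B2) → ℕ} (hB : M.BoundedBy ℓ) (s : List (A ⊕ B2)) :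
    M.output ℓ s = 1 ↔ Accept M s := by
  constructor
  · intro h
    rcases val_imp M _ _ h with ⟨k, d, _, hp, hd⟩ | ⟨d, hp⟩
    · exact ⟨k, d, hp, hd⟩
    · by_cases hd : Dead M d
      · exact ⟨ℓ s, d, hp, hd⟩
      · exfalso
        obtain ⟨t, ht⟩ := Set.nonempty_iff_ne_empty.mpr hd
        have := hB s (ℓ s + 1) (M.stepTo t d)
          (pathLen_append M _ _ _ _ (tpath_to_pathLen M _ _ _ hp) ⟨t, ht, rfl⟩)
        omega
  · rintro ⟨k, d, hp, hd⟩
    exact val_one_of_path M k (ℓ s) _ _ hp hd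
      (hB s k d (tpath_to_pathLen M _ _ _ hp))

end Machine

section Inner

variable {A : Type} [Fintype A] (M : OldSRTM B2 A)

/-- Right-moving weight-1 transition on a `1`-valued cell. -/
def VR (q q' : Fin M.nQ) : Prop :=
  ∃ t ∈ M.trans, t.1 = (q, (Sum.inr 1 : M.Cell)) ∧ t.2.1.1 = q' ∧
    t.2.2.1 = true ∧ t.2.2.2 = 1

/-- Left-moving weight-1 transition on a `1`-valued cell. -/
def VL (q q' : Fin M.nQ) : Prop :=
  ∃ t ∈ M.trans, t.1 = (q, (Sum.inr 1 : M.Cell)) ∧ t.2.1.1 = q' ∧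
    t.2.2.1 = false ∧ t.2.2.2 = 1

/-- No transition at all applies in state `q` on a `1`-valued cell. -/
def DeadV (q : Fin M.nQ) : Prop :=
  ∀ t ∈ M.trans, ¬(t.1.1 = q ∧ t.1.2 = (Sum.inr 1 : M.Cell))

/-- Abstract walk inside a block of `m` `1`-valued cells (local coordinates). -/
def AStep (m : ℕ) (p p' : Fin M.nQ × ℕ) : Prop :=
  (VR M p.1 p'.1 ∧ p'.2 = p.2 + 1 ∧ p.2 + 1 < m) ∨ (VL M p.1 p'.1 ∧ p.2 = p'.2 + 1)

def AReach (m : ℕ) : (Fin M.nQ × ℕ) → (Fin M.nQ × ℕ) → Prop :=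
  Relation.ReflTransGen (AStep M m)

def LL (m : ℕ) (q q' : Fin M.nQ) : Prop :=
  ∃ q₁, AReach M m (q, 0) (q₁, 0) ∧ VL M q₁ q'
def LR (m : ℕ) (q q' : Fin M.nQ) : Prop :=
  ∃ q₁, AReach M m (q, 0) (q₁, m - 1) ∧ VR M q₁ q'
def RL (m : ℕ) (q q' : Fin M.nQ) : Prop :=
  ∃ q₁, AReach M m (q, m - 1) (q₁, 0) ∧ VL M q₁ q'
def RR (m : ℕ) (q q' : Fin M.nQ) : Prop :=
  ∃ q₁, AReach M m (q, m - 1) (q₁, m - 1) ∧ VR M q₁ q'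
def LD (m : ℕ) (q : Fin M.nQ) : Prop :=
  ∃ p, AReach M m (q, 0) p ∧ DeadV M p.1
def RD (m : ℕ) (q : Fin M.nQ) : Prop :=
  ∃ p, AReach M m (q, m - 1) p ∧ DeadV M p.1

lemma areach_lt {m : ℕ} {p p' : Fin M.nQ × ℕ} (h : AReach M m p p') (hp : p.2 < m) :
    p'.2 < m := by
  induction h with
  | refl => exact hp
  | tail _ hstep ih =>
    rcases hstep with ⟨_, h1, h2⟩ | ⟨_, h1⟩
    · omega
    · omega

lemma step_VR {q q' : Fin M.nQ} (h : VR M q q') (T : ℕ → M.Cell) (pp : ℕ)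
    (hT : T pp = Sum.inr 1) : TrueStep M (q, T, pp) (q', T, pp + 1) := by
  obtain ⟨t, ht, h1, hq', hdir, hw⟩ := h
  have hcell : t.1.2 = T pp := by rw [h1, hT]
  have hwrite : t.2.1.2 = T pp := by
    rw [← M.cond1 t ht (Or.inl ⟨1, by rw [h1]⟩), hcell]
  refine ⟨t, ⟨ht, by rw [h1], hcell⟩, hw, ?_⟩
  show _ = M.stepTo t (q, T, pp)
  unfold OldSRTM.stepTo
  refine Prod.ext ?_ (Prod.ext ?_ ?_)
  · exact hq'.symm
  · show T = Function.update T pp t.2.1.2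
    rw [hwrite, Function.update_eq_self]
  · show pp + 1 = ((pp : ℤ) + if t.2.2.1 then 1 else -1).natAbs
    rw [hdir, if_pos rfl]
    omega

lemma step_VL {q q' : Fin M.nQ} (h : VL M q q') (T : ℕ → M.Cell) (pp : ℕ)
    (hT : T (pp + 1) = Sum.inr 1) : TrueStep M (q, T, pp + 1) (q', T, pp) := by
  obtain ⟨t, ht, h1, hq', hdir, hw⟩ := h
  have hcell : t.1.2 = T (pp + 1) := by rw [h1, hT]
  have hwrite : t.2.1.2 = T (pp + 1) := by
    rw [← M.cond1 t ht (Or.inl ⟨1, by rw [h1]⟩), hcell]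
  refine ⟨t, ⟨ht, by rw [h1], hcell⟩, hw, ?_⟩
  show _ = M.stepTo t (q, T, pp + 1)
  unfold OldSRTM.stepTo
  refine Prod.ext ?_ (Prod.ext ?_ ?_)
  · exact hq'.symm
  · show T = Function.update T (pp + 1) t.2.1.2
    rw [hwrite, Function.update_eq_self]
  · show pp = (((pp + 1 : ℕ) : ℤ) + if t.2.2.1 then 1 else -1).natAbs
    rw [hdir, if_neg (by decide)]
    omega

lemma dead_of_DeadV {q : Fin M.nQ} (h : DeadV M q) (T : ℕ → M.Cell) (pp : ℕ)
    (hT : T pp = Sum.inr 1) : Dead M (q, T, pp) := by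
  rw [Dead, Set.eq_empty_iff_forall_notMem]
  rintro t ⟨ht, h1, h2⟩
  exact h t ht ⟨h1, by rw [h2]; exact hT⟩

lemma DeadV_of_dead {q : Fin M.nQ} {T : ℕ → M.Cell} {pp : ℕ}
    (h : Dead M (q, T, pp)) (hT : T pp = Sum.inr 1) : DeadV M q := by
  rintro t ht ⟨h1, h2⟩
  rw [Dead, Set.eq_empty_iff_forall_notMem] at h
  exact h t ⟨ht, h1, by rw [h2]; exact hT.symm⟩

lemma realize_reach {m : ℕ} {p p' : Fin M.nQ × ℕ} (h : AReach M m p p')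
    (n : ℕ) (T : ℕ → M.Cell) (hBT : ∀ i, i < m → T (n + i) = Sum.inr 1)
    (hp : p.2 < m) :
    Relation.ReflTransGen (TrueStep M) (p.1, T, n + p.2) (p'.1, T, n + p'.2) := by
  induction h with
  | refl => exact Relation.ReflTransGen.refl
  | tail hr hstep ih =>
    rename_i b c
    have hb : b.2 < m := areach_lt M hr hp
    refine ih.tail ?_
    rcases hstep with ⟨hv, h1, h2⟩ | ⟨hv, h1⟩
    · have h3 : n + c.2 = n + b.2 + 1 := by omega
      rw [h3]
      exact step_VR M hv T (n + b.2) (hBT b.2 hb)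
    · have h3 : n + b.2 = n + c.2 + 1 := by omega
      rw [h3]
      exact step_VL M hv T (n + c.2) (by rw [← h3]; exact hBT b.2 hb)

end Inner

section Extract

variable {A : Type} [Fintype A] (M : OldSRTM B2 A)

lemma extract (n m : ℕ) (hn : 1 ≤ n) (T : ℕ → M.Cell)
    (hBT : ∀ i, i < m → T (n + i) = Sum.inr 1) :
    ∀ (k : ℕ) (q : Fin M.nQ) (i : ℕ), i < m → ∀ d : M.Config,
      TPath M k (q, T, n + i) d → Dead M d →
      (∃ p, AReach M m (q, i) p ∧ DeadV M p.1)
      ∨ (∃ q₁ q₂ j, AReach M m (q, i) (q₁, 0) ∧ VL M q₁ q₂ ∧ j < k ∧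
          TPath M j (q₂, T, n - 1) d)
      ∨ (∃ q₁ q₂ j, AReach M m (q, i) (q₁, m - 1) ∧ VR M q₁ q₂ ∧ j < k ∧
          TPath M j (q₂, T, n + m) d) := by
  intro k
  induction k with
  | zero =>
    intro q i hi d hp hd
    cases hp
    exact Or.inl ⟨(q, i), Relation.ReflTransGen.refl, DeadV_of_dead M hd (hBT i hi)⟩
  | succ k ih =>
    rintro q i hi d ⟨c', ⟨t, ⟨ht, ht1, ht2⟩, hw, rfl⟩, hp⟩ hd
    have hcell : t.1.2 = Sum.inr 1 := by rw [ht2]; exact hBT i hi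
    have hwrite : t.2.1.2 = t.1.2 := (M.cond1 t ht (Or.inl ⟨1, hcell⟩)).symm
    have htape : Function.update T (n + i) t.2.1.2 = T := by
      rw [hwrite, show t.1.2 = T (n + i) from ht2, Function.update_eq_self]
    have hq : t.1.1 = q := ht1
    have hVpair : t.1 = (q, (Sum.inr 1 : M.Cell)) := Prod.ext hq hcell
    cases hdir : t.2.2.1 with
    | true =>
      have hVR : VR M q t.2.1.1 := ⟨t, ht, hVpair, rfl, hdir, hw⟩
      have hstep : M.stepTo t (q, T, n + i) = (t.2.1.1, T, n + i + 1) := by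
        unfold OldSRTM.stepTo
        refine Prod.ext rfl (Prod.ext htape ?_)
        show (((n + i : ℕ) : ℤ) + if t.2.2.1 then 1 else -1).natAbs = n + i + 1
        rw [hdir, if_pos rfl]
        omega
      rw [hstep] at hp
      by_cases hlt : i + 1 < m
      · have hA : AStep M m (q, i) (t.2.1.1, i + 1) := Or.inl ⟨hVR, rfl, hlt⟩
        rcases ih t.2.1.1 (i + 1) hlt d hp hd with
          ⟨p, hr, hdv⟩ | ⟨q₁, q₂, j, hr, hv, hj, hp'⟩ | ⟨q₁, q₂, j, hr, hv, hj, hp'⟩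
        · exact Or.inl ⟨p, Relation.ReflTransGen.head hA hr, hdv⟩
        · exact Or.inr (Or.inl ⟨q₁, q₂, j, Relation.ReflTransGen.head hA hr, hv, by omega, hp'⟩)
        · exact Or.inr (Or.inr ⟨q₁, q₂, j, Relation.ReflTransGen.head hA hr, hv, by omega, hp'⟩)
      · have him : i = m - 1 := by omega
        have hnm : n + i + 1 = n + m := by omega
        rw [hnm] at hp
        refine Or.inr (Or.inr ⟨q, t.2.1.1, k, ?_, hVR, by omega, hp⟩)
        rw [← him]
        exact Relation.ReflTransGen.refl
    | false =>
      have hVL : VL M q t.2.1.1 := ⟨t, ht, hVpair, rfl, hdir, hw⟩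
      cases i with
      | zero =>
        have hstep : M.stepTo t (q, T, n + 0) = (t.2.1.1, T, n - 1) := by
          unfold OldSRTM.stepTo
          refine Prod.ext rfl (Prod.ext htape ?_)
          show (((n + 0 : ℕ) : ℤ) + if t.2.2.1 then 1 else -1).natAbs = n - 1
          rw [hdir, if_neg (by decide)]
          omega
        rw [hstep] at hp
        exact Or.inr (Or.inl ⟨q, t.2.1.1, k, Relation.ReflTransGen.refl, hVL, by omega, hp⟩)
      | succ i' =>
        have hstep : M.stepTo t (q, T, n + (i' + 1)) = (t.2.1.1, T, n + i') := by
          unfold OldSRTM.stepTo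
          refine Prod.ext rfl (Prod.ext htape ?_)
          show (((n + (i' + 1) : ℕ) : ℤ) + if t.2.2.1 then 1 else -1).natAbs = n + i'
          rw [hdir, if_neg (by decide)]
          omega
        rw [hstep] at hp
        have hA : AStep M m (q, i' + 1) (t.2.1.1, i') := Or.inr ⟨hVL, rfl⟩
        rcases ih t.2.1.1 i' (by omega) d hp hd with
          ⟨p, hr, hdv⟩ | ⟨q₁, q₂, j, hr, hv, hj, hp'⟩ | ⟨q₁, q₂, j, hr, hv, hj, hp'⟩
        · exact Or.inl ⟨p, Relation.ReflTransGen.head hA hr, hdv⟩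
        · exact Or.inr (Or.inl ⟨q₁, q₂, j, Relation.ReflTransGen.head hA hr, hv, by omega, hp'⟩)
        · exact Or.inr (Or.inr ⟨q₁, q₂, j, Relation.ReflTransGen.head hA hr, hv, by omega, hp'⟩)

end Extract

section Main

variable {A : Type} [Fintype A] (M : OldSRTM B2 A) (n m0 m1 : ℕ)

/-- Compress the value block `[n, n+m1)` to `[n, n+m0)` on the tape. -/
def phiT (T : ℕ → M.Cell) : ℕ → M.Cell := fun i =>
  if i < n then T i else if i < n + m0 then Sum.inr 1 else T (i + (m1 - m0))

/-- Corresponding head-position map for positions outside the block. -/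
def phiP (p : ℕ) : ℕ := if p < n then p else p - (m1 - m0)

lemma phi_cell (T : ℕ → M.Cell) (p : ℕ) (h : p < n ∨ n + m1 ≤ p) (hm : m0 ≤ m1) :
    phiT M n m0 m1 T (phiP n m0 m1 p) = T p := by
  rcases h with h | h
  · have hp' : phiP n m0 m1 p = p := by unfold phiP; rw [if_pos h]
    rw [hp']
    unfold phiT
    rw [if_pos h]
  · have hp' : phiP n m0 m1 p = p - (m1 - m0) := by unfold phiP; rw [if_neg (by omega)]
    rw [hp']
    unfold phiT
    rw [if_neg (by omega), if_neg (by omega)]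
    congr 1
    omega

lemma phi_update (T : ℕ → M.Cell) (p : ℕ) (v : M.Cell) (h : p < n ∨ n + m1 ≤ p)
    (hm : m0 ≤ m1) :
    phiT M n m0 m1 (Function.update T p v)
      = Function.update (phiT M n m0 m1 T) (phiP n m0 m1 p) v := by
  funext i
  simp only [phiT, phiP, Function.update_apply]
  rcases h with h | h <;>
    · split_ifs <;> first | rfl | omega | (exfalso; omega) | (congr 1; omega)

lemma phi_BT (T : ℕ → M.Cell) : ∀ i, i < m0 → phiT M n m0 m1 T (n + i) = Sum.inr 1 := by
  intro i hi
  unfold phiT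
  rw [if_neg (by omega), if_pos (by omega)]

lemma dead_phi (hm : m0 ≤ m1) {q : Fin M.nQ} {T : ℕ → M.Cell} {p : ℕ}
    (houter : p < n ∨ n + m1 ≤ p) (h : Dead M (q, T, p)) :
    Dead M (q, phiT M n m0 m1 T, phiP n m0 m1 p) := by
  rw [Dead, Set.eq_empty_iff_forall_notMem] at h ⊢
  rintro t ⟨ht, h1, h2⟩
  refine h t ⟨ht, h1, ?_⟩
  show t.1.2 = T p
  rw [show t.1.2 = phiT M n m0 m1 T (phiP n m0 m1 p) from h2]
  exact phi_cell M n m0 m1 T p houter hm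

lemma phi_step (hm : m0 ≤ m1) {q : Fin M.nQ} {T : ℕ → M.Cell} {p : ℕ}
    (houter : p < n ∨ n + m1 ≤ p) {t : M.Trans}
    (hta : t ∈ M.applicable (q, T, p)) (hw : t.2.2.2 = 1) (w : ℕ)
    (hphinew : ((phiP n m0 m1 p : ℤ) + (if t.2.2.1 then 1 else -1)).natAbs = w) :
    TrueStep M (q, phiT M n m0 m1 T, phiP n m0 m1 p)
      (t.2.1.1, phiT M n m0 m1 (Function.update T p t.2.1.2), w) := by
  obtain ⟨ht, h1, h2⟩ := hta
  refine ⟨t, ⟨ht, h1, ?_⟩, hw, ?_⟩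
  · show t.1.2 = phiT M n m0 m1 T (phiP n m0 m1 p)
    rw [show t.1.2 = T p from h2]
    exact (phi_cell M n m0 m1 T p houter hm).symm
  · show _ = M.stepTo t (q, phiT M n m0 m1 T, phiP n m0 m1 p)
    unfold OldSRTM.stepTo
    refine Prod.ext rfl (Prod.ext ?_ ?_)
    · exact phi_update M n m0 m1 T p t.2.1.2 houter hm
    · exact hphinew.symm

lemma main_transfer (hn : 1 ≤ n) (hm0 : 1 ≤ m0) (hm01 : m0 < m1)
    (hLL' : ∀ q q', LL M m1 q q' → LL M m0 q q')
    (hLR' : ∀ q q', LR M m1 q q' → LR M m0 q q')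
    (hRL' : ∀ q q', RL M m1 q q' → RL M m0 q q')
    (hRR' : ∀ q q', RR M m1 q q' → RR M m0 q q')
    (hLD' : ∀ q, LD M m1 q → LD M m0 q)
    (hRD' : ∀ q, RD M m1 q → RD M m0 q) :
    ∀ (k : ℕ) (q : Fin M.nQ) (T : ℕ → M.Cell) (p : ℕ),
      (p < n ∨ n + m1 ≤ p) → (∀ i, i < m1 → T (n + i) = Sum.inr 1) →
      ∀ d, TPath M k (q, T, p) d → Dead M d →
      ∃ d', Relation.ReflTransGen (TrueStep M)
        (q, phiT M n m0 m1 T, phiP n m0 m1 p) d' ∧ Dead M d' := by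
  intro k
  induction k using Nat.strong_induction_on with
  | _ k ih =>
  cases k with
  | zero =>
    intro q T p houter hBT d hp hd
    cases hp
    exact ⟨_, Relation.ReflTransGen.refl, dead_phi M n m0 m1 (by omega) houter hd⟩
  | succ k =>
    rintro q T p houter hBT d ⟨c', ⟨t, hta, hw, rfl⟩, hp⟩ hd
    have hT'BT : ∀ i, i < m1 → Function.update T p t.2.1.2 (n + i) = Sum.inr 1 := by
      intro i hi
      rcases houter with h | h <;>
        · rw [Function.update_apply, if_neg (by omega)]
          exact hBT i hi
    set T' := Function.update T p t.2.1.2 with hT'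
    set T0 := phiT M n m0 m1 T' with hT0
    have hBT0 : ∀ i, i < m0 → T0 (n + i) = Sum.inr 1 := phi_BT M n m0 m1 T'
    rcases houter with hpl | hpr
    · -- head left of the block
      cases hdir : t.2.2.1 with
      | true =>
        have hstep : M.stepTo t (q, T, p) = (t.2.1.1, T', p + 1) := by
          unfold OldSRTM.stepTo
          refine Prod.ext rfl (Prod.ext rfl ?_)
          show ((p : ℤ) + if t.2.2.1 then 1 else -1).natAbs = p + 1
          rw [hdir, if_pos rfl]; omega
        rw [hstep] at hp
        by_cases hlt : p + 1 < n
        · -- stays outside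
          obtain ⟨d', hrd, hdd⟩ :=
            ih k (by omega) t.2.1.1 T' (p + 1) (Or.inl hlt) hT'BT d hp hd
          refine ⟨d', Relation.ReflTransGen.head
            (phi_step M n m0 m1 (by omega) (Or.inl hpl) hta hw _ ?_) hrd, hdd⟩
          rw [hdir, if_pos rfl]
          simp only [phiP]
          split_ifs <;> omega
        · -- enters the block from the left
          have hpe : p + 1 = n := by omega
          rw [hpe] at hp
          have hentry : TrueStep M (q, phiT M n m0 m1 T, phiP n m0 m1 p)
              (t.2.1.1, T0, n) := by
            refine phi_step M n m0 m1 (by omega) (Or.inl hpl) hta hw n ?_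
            rw [hdir, if_pos rfl]
            simp only [phiP]
            split_ifs <;> omega
          rcases extract M n m1 hn T' hT'BT k t.2.1.1 0 (by omega) d hp hd with
            ⟨pd, hr1, hdv1⟩ | ⟨q₁, q₂, j, hr1, hv1, hj, hp'⟩ | ⟨q₁, q₂, j, hr1, hv1, hj, hp'⟩
          · obtain ⟨pd0, hr0, hdv0⟩ := hLD' _ ⟨pd, hr1, hdv1⟩
            have hrr := realize_reach M hr0 n T0 hBT0 (show (0:ℕ) < m0 by omega)
            refine ⟨(pd0.1, T0, n + pd0.2), Relation.ReflTransGen.head hentry hrr, ?_⟩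
            exact dead_of_DeadV M hdv0 T0 (n + pd0.2)
              (hBT0 pd0.2 (areach_lt M hr0 (show (0:ℕ) < m0 by omega)))
          · obtain ⟨q₁', hr0, hv0⟩ := hLL' _ _ ⟨q₁, hr1, hv1⟩
            have hrr := realize_reach M hr0 n T0 hBT0 (show (0:ℕ) < m0 by omega)
            have hex : TrueStep M (q₁', T0, n - 1 + 1) (q₂, T0, n - 1) :=
              step_VL M hv0 T0 (n - 1)
                (by rw [show n - 1 + 1 = n by omega]
                    exact hBT0 0 (by omega))
            rw [show n - 1 + 1 = n by omega] at hex
            obtain ⟨d', hrd, hdd⟩ :=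
              ih j (by omega) q₂ T' (n - 1) (Or.inl (by omega)) hT'BT d hp' hd
            rw [show phiP n m0 m1 (n - 1) = n - 1 by
              simp only [phiP]; rw [if_pos (by omega)]] at hrd
            exact ⟨d', ((Relation.ReflTransGen.head hentry hrr).tail hex).trans hrd, hdd⟩
          · obtain ⟨q₁', hr0, hv0⟩ := hLR' _ _ ⟨q₁, hr1, hv1⟩
            have hrr := realize_reach M hr0 n T0 hBT0 (show (0:ℕ) < m0 by omega)
            have hex : TrueStep M (q₁', T0, n + (m0 - 1)) (q₂, T0, n + (m0 - 1) + 1) :=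
              step_VR M hv0 T0 (n + (m0 - 1)) (hBT0 (m0 - 1) (by omega))
            rw [show n + (m0 - 1) + 1 = n + m0 by omega] at hex
            obtain ⟨d', hrd, hdd⟩ :=
              ih j (by omega) q₂ T' (n + m1) (Or.inr (by omega)) hT'BT d hp' hd
            rw [show phiP n m0 m1 (n + m1) = n + m0 by
              simp only [phiP]; rw [if_neg (by omega)]; omega] at hrd
            exact ⟨d', ((Relation.ReflTransGen.head hentry hrr).tail hex).trans hrd, hdd⟩
      | false =>
        by_cases hp0 : p = 0
        · subst hp0
          by_cases hn1 : n = 1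
          · -- n = 1, head at 0 moving left lands on cell 1 = n : enters the block
            have hstep : M.stepTo t (q, T, 0) = (t.2.1.1, T', n) := by
              unfold OldSRTM.stepTo
              refine Prod.ext rfl (Prod.ext rfl ?_)
              show (((0:ℕ) : ℤ) + if t.2.2.1 then 1 else -1).natAbs = n
              rw [hdir, if_neg (by decide)]; omega
            rw [hstep] at hp
            have hentry : TrueStep M (q, phiT M n m0 m1 T, phiP n m0 m1 0)
                (t.2.1.1, T0, n) := by
              refine phi_step M n m0 m1 (by omega) (Or.inl hpl) hta hw n ?_
              rw [hdir, if_neg (by decide)]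
              simp only [phiP]
              split_ifs <;> omega
            rcases extract M n m1 hn T' hT'BT k t.2.1.1 0 (by omega) d hp hd with
              ⟨pd, hr1, hdv1⟩ | ⟨q₁, q₂, j, hr1, hv1, hj, hp'⟩ | ⟨q₁, q₂, j, hr1, hv1, hj, hp'⟩
            · obtain ⟨pd0, hr0, hdv0⟩ := hLD' _ ⟨pd, hr1, hdv1⟩
              have hrr := realize_reach M hr0 n T0 hBT0 (show (0:ℕ) < m0 by omega)
              refine ⟨(pd0.1, T0, n + pd0.2), Relation.ReflTransGen.head hentry hrr, ?_⟩
              exact dead_of_DeadV M hdv0 T0 (n + pd0.2)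
                (hBT0 pd0.2 (areach_lt M hr0 (show (0:ℕ) < m0 by omega)))
            · obtain ⟨q₁', hr0, hv0⟩ := hLL' _ _ ⟨q₁, hr1, hv1⟩
              have hrr := realize_reach M hr0 n T0 hBT0 (show (0:ℕ) < m0 by omega)
              have hex : TrueStep M (q₁', T0, n - 1 + 1) (q₂, T0, n - 1) :=
                step_VL M hv0 T0 (n - 1)
                  (by rw [show n - 1 + 1 = n by omega]
                      exact hBT0 0 (by omega))
              rw [show n - 1 + 1 = n by omega] at hex
              obtain ⟨d', hrd, hdd⟩ :=
                ih j (by omega) q₂ T' (n - 1) (Or.inl (by omega)) hT'BT d hp' hd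
              rw [show phiP n m0 m1 (n - 1) = n - 1 by
                simp only [phiP]; rw [if_pos (by omega)]] at hrd
              exact ⟨d', ((Relation.ReflTransGen.head hentry hrr).tail hex).trans hrd, hdd⟩
            · obtain ⟨q₁', hr0, hv0⟩ := hLR' _ _ ⟨q₁, hr1, hv1⟩
              have hrr := realize_reach M hr0 n T0 hBT0 (show (0:ℕ) < m0 by omega)
              have hex : TrueStep M (q₁', T0, n + (m0 - 1)) (q₂, T0, n + (m0 - 1) + 1) :=
                step_VR M hv0 T0 (n + (m0 - 1)) (hBT0 (m0 - 1) (by omega))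
              rw [show n + (m0 - 1) + 1 = n + m0 by omega] at hex
              obtain ⟨d', hrd, hdd⟩ :=
                ih j (by omega) q₂ T' (n + m1) (Or.inr (by omega)) hT'BT d hp' hd
              rw [show phiP n m0 m1 (n + m1) = n + m0 by
                simp only [phiP]; rw [if_neg (by omega)]; omega] at hrd
              exact ⟨d', ((Relation.ReflTransGen.head hentry hrr).tail hex).trans hrd, hdd⟩
          · -- n ≥ 2 : 0 ↦ 1 stays outside
            have hstep : M.stepTo t (q, T, 0) = (t.2.1.1, T', 1) := by
              unfold OldSRTM.stepTo
              refine Prod.ext rfl (Prod.ext rfl ?_)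
              show (((0:ℕ) : ℤ) + if t.2.2.1 then 1 else -1).natAbs = 1
              rw [hdir, if_neg (by decide)]; omega
            rw [hstep] at hp
            obtain ⟨d', hrd, hdd⟩ :=
              ih k (by omega) t.2.1.1 T' 1 (Or.inl (by omega)) hT'BT d hp hd
            refine ⟨d', Relation.ReflTransGen.head
              (phi_step M n m0 m1 (by omega) (Or.inl hpl) hta hw _ ?_) hrd, hdd⟩
            rw [hdir, if_neg (by decide)]
            simp only [phiP]
            split_ifs <;> omega
        · -- p ≥ 1, moving left stays outside
          have hstep : M.stepTo t (q, T, p) = (t.2.1.1, T', p - 1) := by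
            unfold OldSRTM.stepTo
            refine Prod.ext rfl (Prod.ext rfl ?_)
            show ((p : ℤ) + if t.2.2.1 then 1 else -1).natAbs = p - 1
            rw [hdir, if_neg (by decide)]; omega
          rw [hstep] at hp
          obtain ⟨d', hrd, hdd⟩ :=
            ih k (by omega) t.2.1.1 T' (p - 1) (Or.inl (by omega)) hT'BT d hp hd
          refine ⟨d', Relation.ReflTransGen.head
            (phi_step M n m0 m1 (by omega) (Or.inl hpl) hta hw _ ?_) hrd, hdd⟩
          rw [hdir, if_neg (by decide)]
          simp only [phiP]
          split_ifs <;> omega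
    · -- head right of the block
      cases hdir : t.2.2.1 with
      | true =>
        have hstep : M.stepTo t (q, T, p) = (t.2.1.1, T', p + 1) := by
          unfold OldSRTM.stepTo
          refine Prod.ext rfl (Prod.ext rfl ?_)
          show ((p : ℤ) + if t.2.2.1 then 1 else -1).natAbs = p + 1
          rw [hdir, if_pos rfl]; omega
        rw [hstep] at hp
        obtain ⟨d', hrd, hdd⟩ :=
          ih k (by omega) t.2.1.1 T' (p + 1) (Or.inr (by omega)) hT'BT d hp hd
        refine ⟨d', Relation.ReflTransGen.head
          (phi_step M n m0 m1 (by omega) (Or.inr hpr) hta hw _ ?_) hrd, hdd⟩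
        rw [hdir, if_pos rfl]
        simp only [phiP]
        split_ifs <;> omega
      | false =>
        by_cases hpe : p = n + m1
        · -- enters the block from the right
          subst hpe
          have hstep : M.stepTo t (q, T, n + m1) = (t.2.1.1, T', n + (m1 - 1)) := by
            unfold OldSRTM.stepTo
            refine Prod.ext rfl (Prod.ext rfl ?_)
            show (((n + m1 : ℕ) : ℤ) + if t.2.2.1 then 1 else -1).natAbs = n + (m1 - 1)
            rw [hdir, if_neg (by decide)]; omega
          rw [hstep] at hp
          have hentry : TrueStep M (q, phiT M n m0 m1 T, phiP n m0 m1 (n + m1))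
              (t.2.1.1, T0, n + (m0 - 1)) := by
            refine phi_step M n m0 m1 (by omega) (Or.inr hpr) hta hw (n + (m0 - 1)) ?_
            rw [hdir, if_neg (by decide)]
            simp only [phiP]
            split_ifs <;> omega
          rcases extract M n m1 hn T' hT'BT k t.2.1.1 (m1 - 1) (by omega) d hp hd with
            ⟨pd, hr1, hdv1⟩ | ⟨q₁, q₂, j, hr1, hv1, hj, hp'⟩ | ⟨q₁, q₂, j, hr1, hv1, hj, hp'⟩
          · obtain ⟨pd0, hr0, hdv0⟩ := hRD' _ ⟨pd, hr1, hdv1⟩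
            have hrr := realize_reach M hr0 n T0 hBT0 (show m0 - 1 < m0 by omega)
            refine ⟨(pd0.1, T0, n + pd0.2), Relation.ReflTransGen.head hentry hrr, ?_⟩
            exact dead_of_DeadV M hdv0 T0 (n + pd0.2)
              (hBT0 pd0.2 (areach_lt M hr0 (show m0 - 1 < m0 by omega)))
          · obtain ⟨q₁', hr0, hv0⟩ := hRL' _ _ ⟨q₁, hr1, hv1⟩
            have hrr := realize_reach M hr0 n T0 hBT0 (show m0 - 1 < m0 by omega)
            have hex : TrueStep M (q₁', T0, n - 1 + 1) (q₂, T0, n - 1) :=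
              step_VL M hv0 T0 (n - 1)
                (by rw [show n - 1 + 1 = n by omega]
                    exact hBT0 0 (by omega))
            rw [show n - 1 + 1 = n by omega] at hex
            obtain ⟨d', hrd, hdd⟩ :=
              ih j (by omega) q₂ T' (n - 1) (Or.inl (by omega)) hT'BT d hp' hd
            rw [show phiP n m0 m1 (n - 1) = n - 1 by
              simp only [phiP]; rw [if_pos (by omega)]] at hrd
            exact ⟨d', ((Relation.ReflTransGen.head hentry hrr).tail hex).trans hrd, hdd⟩
          · obtain ⟨q₁', hr0, hv0⟩ := hRR' _ _ ⟨q₁, hr1, hv1⟩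
            have hrr := realize_reach M hr0 n T0 hBT0 (show m0 - 1 < m0 by omega)
            have hex : TrueStep M (q₁', T0, n + (m0 - 1)) (q₂, T0, n + (m0 - 1) + 1) :=
              step_VR M hv0 T0 (n + (m0 - 1)) (hBT0 (m0 - 1) (by omega))
            rw [show n + (m0 - 1) + 1 = n + m0 by omega] at hex
            obtain ⟨d', hrd, hdd⟩ :=
              ih j (by omega) q₂ T' (n + m1) (Or.inr (by omega)) hT'BT d hp' hd
            rw [show phiP n m0 m1 (n + m1) = n + m0 by
              simp only [phiP]; rw [if_neg (by omega)]; omega] at hrd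
            exact ⟨d', ((Relation.ReflTransGen.head hentry hrr).tail hex).trans hrd, hdd⟩
        · -- stays outside on the right
          have hstep : M.stepTo t (q, T, p) = (t.2.1.1, T', p - 1) := by
            unfold OldSRTM.stepTo
            refine Prod.ext rfl (Prod.ext rfl ?_)
            show ((p : ℤ) + if t.2.2.1 then 1 else -1).natAbs = p - 1
            rw [hdir, if_neg (by decide)]; omega
          rw [hstep] at hp
          obtain ⟨d', hrd, hdd⟩ :=
            ih k (by omega) t.2.1.1 T' (p - 1) (Or.inr (by omega)) hT'BT d hp hd
          refine ⟨d', Relation.ReflTransGen.head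
            (phi_step M n m0 m1 (by omega) (Or.inr hpr) hta hw _ ?_) hrd, hdd⟩
          rw [hdir, if_neg (by decide)]
          simp only [phiP]
          split_ifs <;> omega

end Main

section Glue

variable {A : Type} [Fintype A] (M : OldSRTM B2 A)

lemma tpath_snoc : ∀ k (c d e : M.Config),
    TPath M k c d → TrueStep M d e → TPath M (k + 1) c e := by
  intro k
  induction k with
  | zero =>
    intro c d e h hs
    cases h
    exact ⟨e, hs, rfl⟩
  | succ n ih =>
    rintro c d e ⟨c', hs', hp⟩ hs
    exact ⟨c', hs', ih _ _ _ hp hs⟩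

lemma treach_tpath {c d : M.Config} (h : Relation.ReflTransGen (TrueStep M) c d) :
    ∃ k, TPath M k c d := by
  induction h with
  | refl => exact ⟨0, rfl⟩
  | tail hr hs ih =>
    obtain ⟨k, hk⟩ := ih
    exact ⟨k + 1, tpath_snoc M k _ _ _ hk hs⟩

lemma exists_eq_beh : ∃ m0 m1, 1 ≤ m0 ∧ m0 < m1 ∧
    LL M m1 = LL M m0 ∧ LR M m1 = LR M m0 ∧ RL M m1 = RL M m0 ∧
    RR M m1 = RR M m0 ∧ LD M m1 = LD M m0 ∧ RD M m1 = RD M m0 := by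
  obtain ⟨x, y, hxy, hf⟩ := Finite.exists_ne_map_eq_of_infinite
    (fun m : ℕ => (LL M (m + 1), LR M (m + 1), RL M (m + 1),
      RR M (m + 1), LD M (m + 1), RD M (m + 1)))
  simp only [Prod.mk.injEq] at hf
  obtain ⟨h1, h2, h3, h4, h5, h6⟩ := hf
  rcases Nat.lt_or_ge x y with h | h
  · exact ⟨x + 1, y + 1, by omega, by omega,
      h1.symm, h2.symm, h3.symm, h4.symm, h5.symm, h6.symm⟩
  · exact ⟨y + 1, x + 1, by omega, by omega, h1, h2, h3, h4, h5, h6⟩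

/-- The input `σ^n 1^m`. -/
def inp (a : A) (n m : ℕ) : List (A ⊕ B2) :=
  List.replicate n (Sum.inl a) ++ List.replicate m (Sum.inr 1)

lemma inp_getElem (a : A) (n m i : ℕ) :
    (inp a n m)[i]? = if i < n then some (Sum.inl a)
      else if i < n + m then some (Sum.inr 1) else none := by
  unfold inp
  rcases Nat.lt_or_ge i n with h | h
  · rw [List.getElem?_append_left (by simpa using h), List.getElem?_replicate,
      if_pos h, if_pos h]
  · rw [List.getElem?_append_right (by simpa using h)]
    simp only [List.length_replicate, List.getElem?_replicate]
    split_ifs <;> first | rfl | omega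

lemma initTape_inp (a : A) (n m i : ℕ) :
    M.initTape (inp a n m) i = if i < n then Sum.inl (Sum.inl a)
      else if i < n + m then Sum.inr 1 else Sum.inl (Sum.inr M.blankE) := by
  unfold OldSRTM.initTape
  rw [inp_getElem]
  split_ifs <;> rfl

lemma initTape_BT (a : A) (n m : ℕ) :
    ∀ i, i < m → M.initTape (inp a n m) (n + i) = Sum.inr 1 := by
  intro i hi
  rw [initTape_inp, if_neg (by omega), if_pos (by omega)]

lemma phi_initTape (a : A) (m0 m1 : ℕ) (hm01 : m0 ≤ m1) :
    phiT M m1 m0 m1 (M.initTape (inp a m1 m1)) = M.initTape (inp a m1 m0) := by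
  funext i
  simp only [phiT, initTape_inp]
  split_ifs <;> first | rfl | omega

lemma filterMap_replicate_none {α β : Type*} (f : α → Option β) (x : α)
    (h : f x = none) : ∀ n, (List.replicate n x).filterMap f = [] := by
  intro n
  induction n with
  | zero => rfl
  | succ n ih => rw [List.replicate_succ, List.filterMap_cons, h, ih]

lemma filterMap_replicate_some {α β : Type*} (f : α → Option β) (x : α) (y : β)
    (h : f x = some y) : ∀ n, (List.replicate n x).filterMap f = List.replicate n y := by
  intro n
  induction n with
  | zero => rfl
  | succ n ih => rw [List.replicate_succ, List.filterMap_cons, h, ih, List.replicate_succ]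

lemma condProd_inp_diag (a : A) (n : ℕ) : condProd (inp a n n) = (1 : B2) := by
  unfold condProd
  rw [if_pos ⟨List.replicate n a, List.replicate n (1 : B2),
    by simp [inp, List.map_replicate], by simp⟩]
  unfold inp
  rw [List.filterMap_append]
  have key : ∀ g : A ⊕ B2 → Option B2, g (Sum.inl a) = none → g (Sum.inr 1) = some 1 →
      (List.filterMap g (List.replicate n (Sum.inl a : A ⊕ B2)) ++
        List.filterMap g (List.replicate n (Sum.inr 1 : A ⊕ B2))).prod = (1 : B2) := by
    intro g h1 h2
    rw [filterMap_replicate_none g _ h1, filterMap_replicate_some g _ _ h2,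
      List.nil_append]
    exact B2.prod_replicate_one n
  exact key _ rfl rfl

lemma condProd_inp_ne (a : A) (n m : ℕ) (hnm : n ≠ m) : condProd (inp a n m) = (0 : B2) := by
  unfold condProd
  rw [if_neg]
  rintro ⟨as, rs, heq, hlen⟩
  have hlen2 : n + m = as.length + rs.length := by
    simpa [inp] using congrArg List.length heq
  have hfm := congrArg (List.filterMap
    (Sum.elim (fun x : A => some x) (fun _ : B2 => none))) heq
  rw [List.filterMap_append, List.filterMap_map, List.filterMap_map] at hfm
  rw [show (inp a n m) = List.replicate n (Sum.inl a : A ⊕ B2)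
      ++ List.replicate m (Sum.inr 1 : A ⊕ B2) from rfl,
    List.filterMap_append] at hfm
  rw [filterMap_replicate_some (Sum.elim (fun x : A => some x) (fun _ : B2 => none))
      (Sum.inl a) a rfl,
    filterMap_replicate_none (Sum.elim (fun x : A => some x) (fun _ : B2 => none))
      (Sum.inr 1) rfl,
    List.append_nil] at hfm
  have h1 : (List.filterMap (Sum.elim (fun x : A => some x) (fun _ : B2 => none) ∘ Sum.inl) as) = as := by
    simp [Function.comp]
  have h2 : (List.filterMap (Sum.elim (fun x : A => some x) (fun _ : B2 => none) ∘ Sum.inr) rs) = ([] : List A) := by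
    simp [Function.comp]
  rw [h1, h2, List.append_nil] at hfm
  have : as.length = n := by rw [← hfm, List.length_replicate]
  omega

end Glue

/-- There is a commutative semiring `R` such that the conditional product
function is not computable by any terminating old-model (Eiter–Kiesel) SRTM
over `R`. -/
theorem exists_semiring_condProd_not_oldSRTM_computable :
    ∃ (R : Type) (inst : CommSemiring R), @CondProdUncomputableOld R inst := by
  refine ⟨B2, inferInstance, ?_⟩
  intro A hFA hNA M ℓ hB
  letI : Fintype A := hFA
  obtain ⟨a⟩ := hNA
  by_contra hc
  push_neg at hc
  obtain ⟨m0, m1, hm0, hm01, hLLe, hLRe, hRLe, hRRe, hLDe, hRDe⟩ := exists_eq_beh M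
  have hn1 : 1 ≤ m1 := by omega
  have h1 : Accept M (inp a m1 m1) := by
    rw [← output_iff M hB, hc]
    exact condProd_inp_diag a m1
  obtain ⟨k, d, hp, hd⟩ := h1
  have hBT : ∀ i, i < m1 → M.initTape (inp a m1 m1) (m1 + i) = Sum.inr 1 :=
    initTape_BT M a m1 m1
  obtain ⟨d', hrd, hdd⟩ := main_transfer M m1 m0 m1 hn1 hm0 hm01
    (fun q q' h => hLLe ▸ h) (fun q q' h => hLRe ▸ h) (fun q q' h => hRLe ▸ h)
    (fun q q' h => hRRe ▸ h) (fun q h => hLDe ▸ h) (fun q h => hRDe ▸ h)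
    k M.start (M.initTape (inp a m1 m1)) 0 (Or.inl (by omega)) hBT d hp hd
  rw [phi_initTape M a m0 m1 (by omega)] at hrd
  rw [show phiP m1 m0 m1 0 = 0 by unfold phiP; rw [if_pos (by omega)]] at hrd
  obtain ⟨k', hp'⟩ := treach_tpath M hrd
  have hacc0 : Accept M (inp a m1 m0) := ⟨k', d', hp', hdd⟩
  have hout0 := (output_iff M hB (inp a m1 m0)).mpr hacc0
  rw [hc, condProd_inp_ne a m1 m0 (by omega)] at hout0
  exact B2.zero_ne_one hout0
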